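/- Let S = {A_1, ..., A_N} be a finite subset of a metric space (X, D) selected greedily from a finite set Ŝ (starting from an arbitrary element, at each step adding the element of Ŝ maximizing the sum of distances to already selected elements). Then the average pairwise distance of S is at least half the maximum average pairwise distance over all N-element subsets of Ŝ. -/
import Mathlib


open Finset

private lemma sum_filter_lt_comm {N : ℕ} {M : Type*} [AddCommMonoid M] (f : Fin N → Fin N → M) :
    ∑ i, ∑ j ∈ Finset.univ.filter (fun j : Fin N => i < j), f i j
      = ∑ j, ∑ i ∈ Finset.univ.filter (fun i : Fin N => i < j), f i j := by
  simp_rw [Finset.sum_filter]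
  exact Finset.sum_comm

private lemma card_filter_lt_fin {N : ℕ} (k : Fin N) :
    (Finset.univ.filter (fun i : Fin N => i < k)).card = k.val := by
  have : (Finset.univ.filter (fun i : Fin N => i < k)) = Finset.Iio k := by
    ext i; simp
  rw [this, Fin.card_Iio]

/-- Average pairwise distance of an `N`-tuple of points. -/
noncomputable def avgPairDist {X : Type*} [MetricSpace X] {N : ℕ} (f : Fin N → X) : ℝ :=
  (2 / ((N : ℝ) * ((N : ℝ) - 1))) *
    ∑ i, ∑ j ∈ Finset.univ.filter (fun j : Fin N => i < j), dist (f i) (f j)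

/-- Greedy selection (maximizing the sum of distances to already selected points)
achieves a 2-approximation for the average pairwise distance. -/
theorem greedy_average_two_approx {X : Type*} [MetricSpace X] (N : ℕ) (hN : 2 ≤ N)
    (Shat : Finset X) (x : Fin N → X)
    (hmem : ∀ k, x k ∈ Shat)
    (hgreedy : ∀ k : Fin N, ∀ y ∈ Shat,
      ∑ i ∈ Finset.univ.filter (fun i : Fin N => i < k), dist (x i) y ≤
      ∑ i ∈ Finset.univ.filter (fun i : Fin N => i < k), dist (x i) (x k))
    (s : Fin N → X) (hs : ∀ i, s i ∈ Shat) (hinj : Function.Injective s) :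
    (1 / 2) * avgPairDist s ≤ avgPairDist x := by
  have hN1 : 1 ≤ N := le_trans one_le_two hN
  have hNR : (2 : ℝ) ≤ (N : ℝ) := by exact_mod_cast hN
  set P : Fin N → Finset (Fin N) := fun k => Finset.univ.filter (fun i : Fin N => i < k) with hP
  set D : Fin N → ℝ := fun k => ∑ i ∈ P k, dist (x i) (x k) with hD
  set W : ℝ := ∑ i, ∑ j ∈ Finset.univ.filter (fun j : Fin N => i < j), dist (s i) (s j) with hWdef
  set G : ℝ := ∑ i, ∑ j ∈ Finset.univ.filter (fun j : Fin N => i < j), dist (x i) (x j) with hGdef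
  have hDnn : ∀ k, 0 ≤ D k := fun k => Finset.sum_nonneg fun i _ => dist_nonneg
  -- pair count
  set C : ℕ := ∑ j : Fin N, (Finset.univ.filter (fun j' : Fin N => j < j')).card with hC
  have hCval : C = ∑ i ∈ Finset.range N, i := by
    have h1 := sum_filter_lt_comm (N := N) (fun _ _ => (1 : ℕ))
    have h2 : C = ∑ j : Fin N, ∑ j' ∈ Finset.univ.filter (fun j' : Fin N => j < j'), (1 : ℕ) := by
      simp [hC]
    rw [h2, h1]
    simp only [Finset.sum_const, smul_eq_mul, mul_one]
    rw [← Fin.sum_univ_eq_sum_range]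
    exact Finset.sum_congr rfl fun j _ => card_filter_lt_fin j
  have hC2 : (C : ℝ) * 2 = (N : ℝ) * ((N : ℝ) - 1) := by
    have : C * 2 = N * (N - 1) := by rw [hCval]; exact Finset.sum_range_id_mul_two N
    have := congrArg (fun n : ℕ => (n : ℝ)) this
    push_cast [Nat.cast_sub hN1] at this
    linarith
  -- key inequality for each step k
  have key : ∀ k : Fin N, (k.val : ℝ) * W ≤ ((N : ℝ) * ((N : ℝ) - 1)) * D k := by
    intro k
    have hpair : ∀ j j' : Fin N, (k.val : ℝ) * dist (s j) (s j') ≤ 2 * D k := by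
      intro j j'
      have h1 : ∑ i ∈ P k, dist (x i) (s j) ≤ D k := hgreedy k (s j) (hs j)
      have h2 : ∑ i ∈ P k, dist (x i) (s j') ≤ D k := hgreedy k (s j') (hs j')
      have h3 : ∑ i ∈ P k, dist (s j) (s j')
          ≤ ∑ i ∈ P k, (dist (x i) (s j) + dist (x i) (s j')) :=
        Finset.sum_le_sum fun i _ => dist_triangle_left _ _ _
      rw [Finset.sum_add_distrib] at h3
      have h4 : ∑ i ∈ P k, dist (s j) (s j') = (k.val : ℝ) * dist (s j) (s j') := by
        rw [Finset.sum_const, card_filter_lt_fin k, nsmul_eq_mul]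
      linarith
    calc (k.val : ℝ) * W
        = ∑ j, ∑ j' ∈ Finset.univ.filter (fun j' : Fin N => j < j'),
            (k.val : ℝ) * dist (s j) (s j') := by
          rw [hWdef, Finset.mul_sum]; simp_rw [Finset.mul_sum]
      _ ≤ ∑ j, ∑ j' ∈ Finset.univ.filter (fun j' : Fin N => j < j'), 2 * D k :=
          Finset.sum_le_sum fun j _ => Finset.sum_le_sum fun j' _ => hpair j j'
      _ = (C : ℝ) * (2 * D k) := by
          simp only [Finset.sum_const, nsmul_eq_mul, hC]
          rw [← Finset.sum_mul]
          push_cast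
          ring
      _ = ((N : ℝ) * ((N : ℝ) - 1)) * D k := by rw [← hC2]; ring
  -- sum over k
  have hGalt : ∑ k, D k = G := by
    rw [hGdef, sum_filter_lt_comm (fun i j => dist (x i) (x j))]
  have hsum : (C : ℝ) * W ≤ ((N : ℝ) * ((N : ℝ) - 1)) * G := by
    have h1 : ∑ k : Fin N, (k.val : ℝ) * W ≤ ∑ k : Fin N, ((N : ℝ) * ((N : ℝ) - 1)) * D k :=
      Finset.sum_le_sum fun k _ => key k
    rw [← Finset.sum_mul, ← Finset.mul_sum, hGalt] at h1
    have h2 : ∑ k : Fin N, (k.val : ℝ) = (C : ℝ) := by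
      rw [hCval]
      push_cast
      rw [← Fin.sum_univ_eq_sum_range (fun i => (i : ℝ)) N]
    rwa [h2] at h1
  have hpos : 0 < (N : ℝ) * ((N : ℝ) - 1) := by nlinarith
  have hCpos : 0 < (C : ℝ) := by nlinarith
  have hWG : W ≤ 2 * G := by
    rw [← hC2] at hsum
    nlinarith
  -- conclude
  show (1 / 2) * ((2 / ((N : ℝ) * ((N : ℝ) - 1))) * W) ≤ (2 / ((N : ℝ) * ((N : ℝ) - 1))) * G
  have hc : 0 ≤ 2 / ((N : ℝ) * ((N : ℝ) - 1)) := by positivity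
  have := mul_le_mul_of_nonneg_left hWG hc
  linarith
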